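/- Let p and q be perfect paths in a monomial algebra Λ. (1) If p is a proper left divisor of q, i.e., q = pr with r a nontrivial path, then r is a perfect path. (2) If q is a proper right divisor of p, i.e., p = rq with r nontrivial, then r is a perfect path. -/

import Mathlib

/-! Combinatorial model of a monomial algebra `Λ = KQ/I`.

A finite quiver is given by source and target maps on a type of arrows.
A (nontrivial) path is encoded as a nonempty list of composable arrows;
the admissible monomial ideal `I` is encoded by its set `F` of minimal
generating paths, and a path is zero in `Λ` iff it contains a member of
`F` as a contiguous subpath (infix). -/

/-- A quiver structure on arrow type `E` with vertex type `V`. -/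
structure QuiverData (V E : Type) where
  src : E → V
  tgt : E → V

namespace QuiverData

variable {V E : Type} (Q : QuiverData V E)

/-- `l` is the list of arrows of a path of `Q`. -/
def IsPath (l : List E) : Prop := l.Chain' fun a b => Q.tgt a = Q.src b

/-- Two paths are composable: the target of the first equals the source of
the second (vacuously true if one of them is trivial). -/
def Composable (l m : List E) : Prop :=
  ∀ a ∈ l.getLast?, ∀ b ∈ m.head?, Q.tgt a = Q.src b

end QuiverData

/-- A monomial algebra, encoded combinatorially: a finite quiver together with
the set `F` of minimal paths generating the admissible monomial ideal `I`. -/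
structure MonomialData (V E : Type) extends QuiverData V E where
  F : Set (List E)
  F_path : ∀ f ∈ F, toQuiverData.IsPath f
  F_len : ∀ f ∈ F, 2 ≤ f.length
  F_min : ∀ f ∈ F, ∀ g, g <:+: f → (∃ f' ∈ F, f' <:+: g) → g = f
  admissible : ∃ N, ∀ l, toQuiverData.IsPath l → N ≤ l.length → ∃ f ∈ F, f <:+: l

namespace MonomialData

variable {V E : Type} (M : MonomialData V E)

/-- The path `l` is zero in `Λ`. -/
def IsZero (l : List E) : Prop := ∃ f ∈ M.F, f <:+: l

/-- `l` is a path which is nonzero in `Λ`. -/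
def Nonzero (l : List E) : Prop := M.toQuiverData.IsPath l ∧ ¬ M.IsZero l

/-- A perfect pair of nonzero nontrivial paths, after Chen–Shen–Zhou. -/
def PerfectPair (p q : List E) : Prop :=
  p ≠ [] ∧ q ≠ [] ∧ M.Nonzero p ∧ M.Nonzero q ∧
  M.toQuiverData.Composable p q ∧ M.IsZero (p ++ q) ∧
  (∀ q', q' ≠ [] → M.Nonzero q' → M.toQuiverData.Composable p q' →
      M.IsZero (p ++ q') → q <+: q') ∧
  (∀ p', p' ≠ [] → M.Nonzero p' → M.toQuiverData.Composable p' q →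
      M.IsZero (p' ++ q) → p <:+ p')

/-- A perfect path: a path appearing in a perfect path sequence
`(p₁, …, pₙ, pₙ₊₁ = p₁)`, encoded by a periodic sequence of paths each of
whose consecutive pairs is perfect. -/
def IsPerfect (p : List E) : Prop :=
  ∃ (n : ℕ) (s : ℕ → List E), 0 < n ∧ s 0 = p ∧ (∀ i, s (i + n) = s i) ∧
    ∀ i, M.PerfectPair (s i) (s (i + 1))

/-- `c` is the underlying cycle associated with the perfect path `p`:
the shortest cycle `c` with `p₁ ⋯ pₙ = cˡ` for some `l > 0`, for a perfect
path sequence through `p`. -/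
def IsUnderlyingCycleOf (c p : List E) : Prop :=
  ∃ (n : ℕ) (s : ℕ → List E), 0 < n ∧ s 0 = p ∧ (∀ i, s (i + n) = s i) ∧
    (∀ i, M.PerfectPair (s i) (s (i + 1))) ∧
    (∃ l, 0 < l ∧ ((List.range n).map s).flatten = (List.replicate l c).flatten) ∧
    (∀ c' l', 0 < l' → ((List.range n).map s).flatten = (List.replicate l' c').flatten →
      c.length ≤ c'.length)


/-- There is an overlap between the perfect paths `p` and `q` (`p` overlaps `q`). -/
def Overlap (p q : List E) : Prop :=
  ∃ x p' q' : List E, x ≠ [] ∧ p = p' ++ x ∧ q = x ++ q' ∧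
    M.Nonzero (p' ++ x ++ q') ∧ (p = q → p' ≠ [] ∧ q' ≠ [])

/-- An elementary perfect path: a source in the Hasse quiver of the left
divisibility order `⪯` on perfect paths, i.e. it is not a proper left divisor
of any perfect path. -/
def Elementary (p : List E) : Prop :=
  M.IsPerfect p ∧ ¬ ∃ q, M.IsPerfect q ∧ p <+: q ∧ p ≠ q

/-- A co-elementary perfect path: a sink in the Hasse quiver of `⪯`, i.e.
no proper left divisor of it is perfect. -/
def CoElementary (p : List E) : Prop :=
  M.IsPerfect p ∧ ¬ ∃ q, M.IsPerfect q ∧ q <+: p ∧ q ≠ p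

/-- There is an arrow `q ⟶ p` in the Hasse quiver of `(ℙ_Λ, ⪯)`:
`p ≺ q` and no perfect path lies strictly between them. -/
def HasseArrowPrec (q p : List E) : Prop :=
  M.IsPerfect p ∧ M.IsPerfect q ∧ p <+: q ∧ p ≠ q ∧
    ¬ ∃ r, M.IsPerfect r ∧ p <+: r ∧ p ≠ r ∧ r <+: q ∧ r ≠ q

end MonomialData

/-- Two cycles are equivalent (agree up to cyclic permutation): each is a
subpath of a power of the other. -/
def CyclesEquiv {E : Type} (c d : List E) : Prop :=
  ∃ m k, 0 < m ∧ 0 < k ∧ c <:+: (List.replicate m d).flatten ∧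
    d <:+: (List.replicate k c).flatten



/-! ### Auxiliary lemmas -/

namespace MonomialData

variable {V E : Type} {M : MonomialData V E}

lemma suffix_append_right_cancel {x y z : List E} (h : x ++ z <:+ y ++ z) : x <:+ y := by
  obtain ⟨w, hw⟩ := h
  rw [← List.append_assoc] at hw
  exact ⟨w, List.append_cancel_right hw⟩

lemma IsZero.of_infix {l m : List E} (h : M.IsZero l) (hlm : l <:+: m) : M.IsZero m := by
  obtain ⟨f, hf, hfl⟩ := h
  exact ⟨f, hf, hfl.trans hlm⟩

lemma Nonzero.of_infix {l m : List E} (h : M.Nonzero m) (hlm : l <:+: m) : M.Nonzero l :=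
  ⟨List.IsChain.infix h.1 hlm, fun hz => h.2 (hz.of_infix hlm)⟩

lemma F_proper_nonzero {f g : List E} (hf : f ∈ M.F) (hg : g <:+: f) (hne : g ≠ f) :
    M.Nonzero g :=
  ⟨List.IsChain.infix (M.F_path f hf) hg, fun hz => hne (M.F_min f hf g hg hz)⟩

lemma composable_head_congr {l m m' : List E} (h : M.toQuiverData.Composable l m)
    (hh : m'.head? = m.head?) : M.toQuiverData.Composable l m' := by
  intro a ha b hb
  exact h a ha b (hh ▸ hb)

lemma composable_last_congr {l l' m : List E} (h : M.toQuiverData.Composable l m)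
    (hh : l'.getLast? = l.getLast?) : M.toQuiverData.Composable l' m := by
  intro a ha b hb
  exact h a (hh ▸ ha) b hb

lemma isPath_append {l m : List E} :
    M.toQuiverData.IsPath (l ++ m) ↔ M.toQuiverData.IsPath l ∧ M.toQuiverData.IsPath m ∧
      M.toQuiverData.Composable l m :=
  List.isChain_append

lemma PerfectPair.ne_nil_left {a b : List E} (h : M.PerfectPair a b) : a ≠ [] := h.1
lemma PerfectPair.ne_nil_right {a b : List E} (h : M.PerfectPair a b) : b ≠ [] := h.2.1
lemma PerfectPair.nonzero_left {a b : List E} (h : M.PerfectPair a b) : M.Nonzero a := h.2.2.1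
lemma PerfectPair.nonzero_right {a b : List E} (h : M.PerfectPair a b) : M.Nonzero b :=
  h.2.2.2.1
lemma PerfectPair.composable {a b : List E} (h : M.PerfectPair a b) :
    M.toQuiverData.Composable a b := h.2.2.2.2.1
lemma PerfectPair.isZero {a b : List E} (h : M.PerfectPair a b) : M.IsZero (a ++ b) :=
  h.2.2.2.2.2.1
lemma PerfectPair.rmin {a b : List E} (h : M.PerfectPair a b) :
    ∀ q', q' ≠ [] → M.Nonzero q' → M.toQuiverData.Composable a q' → M.IsZero (a ++ q') →
      b <+: q' := h.2.2.2.2.2.2.1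
lemma PerfectPair.lmin {a b : List E} (h : M.PerfectPair a b) :
    ∀ p', p' ≠ [] → M.Nonzero p' → M.toQuiverData.Composable p' b → M.IsZero (p' ++ b) →
      a <:+ p' := h.2.2.2.2.2.2.2

lemma pair_left_unique {a a' b : List E} (h1 : M.PerfectPair a b) (h2 : M.PerfectPair a' b) :
    a = a' := by
  have p1 := h1.lmin a' h2.ne_nil_left h2.nonzero_left h2.composable h2.isZero
  have p2 := h2.lmin a h1.ne_nil_left h1.nonzero_left h1.composable h1.isZero
  exact p1.eq_of_length_le p2.length_le

/-- In any perfect pair, the concatenation is itself a minimal relation. -/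
lemma pair_append_mem_F {a b : List E} (h : M.PerfectPair a b) : a ++ b ∈ M.F := by
  obtain ⟨ha, hb, hanz, hbnz, hcomp, hzero, hrm, hlm⟩ := h
  obtain ⟨f, hfF, u, v, huv⟩ := hzero
  have hfa : ¬ f <:+: a := fun hin => hanz.2 ⟨f, hfF, hin⟩
  have hfb : ¬ f <:+: b := fun hin => hbnz.2 ⟨f, hfF, hin⟩
  have hupre : u <+: a ++ b := ⟨f ++ v, by rw [← List.append_assoc]; exact huv⟩
  have hua : u.length < a.length := by
    by_contra hle
    push_neg at hle
    obtain ⟨w, hw⟩ := List.prefix_of_prefix_length_le (List.prefix_append a b) hupre hle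
    apply hfb
    have hwb : w ++ (f ++ v) = b := by
      apply List.append_cancel_left (as := a)
      rw [← List.append_assoc, hw, ← List.append_assoc]
      exact huv
    exact ⟨w, v, by rw [List.append_assoc]; exact hwb⟩
  obtain ⟨a₂, ha₂⟩ := List.prefix_of_prefix_length_le hupre (List.prefix_append a b)
    (le_of_lt hua)
  have ha₂ne : a₂ ≠ [] := by
    rintro rfl
    rw [List.append_nil] at ha₂
    rw [ha₂] at hua
    exact lt_irrefl _ hua
  have hfv : f ++ v = a₂ ++ b := by
    apply List.append_cancel_left (as := u)
    rw [← List.append_assoc, huv, ← ha₂, List.append_assoc]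
  have ha₂pre : a₂ <+: f ++ v := by rw [hfv]; exact List.prefix_append a₂ b
  have ha₂a : a₂ <:+ a := ⟨u, ha₂⟩
  have ha₂f : a₂ <+: f := by
    by_cases hlen : f.length ≤ a₂.length
    · exfalso
      have hfapre : f <+: a₂ :=
        List.prefix_of_prefix_length_le (List.prefix_append f v) ha₂pre hlen
      exact hfa (hfapre.isInfix.trans ha₂a.isInfix)
    · push_neg at hlen
      exact List.prefix_of_prefix_length_le ha₂pre (List.prefix_append f v) (le_of_lt hlen)
  obtain ⟨b₁, hb₁⟩ := ha₂f
  have hb₁ne : b₁ ≠ [] := by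
    rintro rfl
    rw [List.append_nil] at hb₁
    exact hfa (hb₁ ▸ ha₂a.isInfix)
  have hb₁b : b₁ ++ v = b := by
    apply List.append_cancel_left (as := a₂)
    rw [← List.append_assoc, hb₁]
    exact hfv
  have haa₂ : a = a₂ := by
    have h1 : a <:+ a₂ := by
      apply hlm a₂ ha₂ne (hanz.of_infix ha₂a.isInfix) ?_ ?_
      · apply composable_last_congr hcomp
        rw [← ha₂, List.getLast?_append_of_ne_nil u ha₂ne]
      · refine ⟨f, hfF, List.IsPrefix.isInfix ?_⟩
        rw [← hb₁]
        exact (List.prefix_append_right_inj a₂).mpr ⟨v, hb₁b⟩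
    exact h1.eq_of_length_le ha₂a.length_le
  have hbb₁ : b = b₁ := by
    have h1 : b <+: b₁ := by
      apply hrm b₁ hb₁ne (hbnz.of_infix (List.IsPrefix.isInfix ⟨v, hb₁b⟩)) ?_ ?_
      · apply composable_head_congr hcomp
        rw [← hb₁b, List.head?_append_of_ne_nil b₁ hb₁ne]
      · refine ⟨f, hfF, ?_⟩
        rw [← hb₁, haa₂]
    exact h1.eq_of_length_le (List.IsPrefix.length_le ⟨v, hb₁b⟩)
  have hfab : f = a ++ b := by
    rw [← hb₁, haa₂, hbb₁]
  exact hfab ▸ hfF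

/-- If `(p, p')`, `(q, q')` are perfect pairs and `q = p ++ r`, then `p' = r ++ q'`. -/
lemma lemE {p p' q q' r : List E} (h1 : M.PerfectPair p p') (h2 : M.PerfectPair q q')
    (hq : q = p ++ r) (hr : r ≠ []) : p' = r ++ q' := by
  have hqF : q ++ q' ∈ M.F := pair_append_mem_F h2
  have hpF : p ++ p' ∈ M.F := pair_append_mem_F h1
  have hp0 : p ≠ [] := h1.ne_nil_left
  have hqq'path : M.toQuiverData.IsPath (q ++ q') := M.F_path _ hqF
  have hs1 : p' <+: r ++ q' := by
    apply h1.rmin (r ++ q') (fun h => hr (List.append_eq_nil_iff.mp h).1) ?_ ?_ ?_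
    · apply F_proper_nonzero hqF ⟨p, [], by simp [hq]⟩
      intro hcontra
      have hl := congrArg List.length hcontra
      simp only [hq, List.length_append] at hl
      have := List.length_pos_iff.mpr hp0
      omega
    · have hpath : M.toQuiverData.IsPath (p ++ (r ++ q')) := by
        rw [← List.append_assoc, ← hq]
        exact hqq'path
      exact (isPath_append.mp hpath).2.2
    · refine ⟨q ++ q', hqF, ?_⟩
      rw [hq, List.append_assoc]
  have hs2 : ¬ p' <+: r := by
    intro hcon
    refine h2.nonzero_left.2 (IsZero.of_infix ⟨p ++ p', hpF, List.infix_rfl⟩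
      (List.IsPrefix.isInfix ?_))
    rw [hq]
    exact (List.prefix_append_right_inj p).mpr hcon
  have hs3 : r <+: p' := by
    rcases le_or_gt p'.length r.length with hle | hlt
    · exact absurd (List.prefix_of_prefix_length_le hs1 (List.prefix_append r q') hle) hs2
    · exact List.prefix_of_prefix_length_le (List.prefix_append r q') hs1 (le_of_lt hlt)
  obtain ⟨c, hcdef⟩ := hs3
  have hcq' : c <+: q' := by
    have h3 : r ++ c <+: r ++ q' := by rw [hcdef]; exact hs1
    exact (List.prefix_append_right_inj r).mp h3
  have hcne : c ≠ [] := by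
    rintro rfl
    rw [List.append_nil] at hcdef
    refine h2.nonzero_left.2 ⟨p ++ p', hpF, ?_⟩
    rw [hq, hcdef]
  have hs4 : q' <+: c := by
    apply h2.rmin c hcne (h2.nonzero_right.of_infix hcq'.isInfix) ?_ ?_
    · have hpath : M.toQuiverData.IsPath (q ++ c) := by
        have heq : q ++ c = p ++ p' := by rw [hq, List.append_assoc, hcdef]
        rw [heq]
        exact M.F_path _ hpF
      exact (isPath_append.mp hpath).2.2
    · refine ⟨p ++ p', hpF, ?_⟩
      rw [hq, List.append_assoc, hcdef]
  have hcq : c = q' := hcq'.eq_of_length_le hs4.length_le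
  rw [← hcdef, hcq]

/-- If `(a, p)`, `(a', q)` are perfect pairs and `p = r ++ q`, then `a' = a ++ r`. -/
lemma lemF {a p a' q r : List E} (h1 : M.PerfectPair a p) (h2 : M.PerfectPair a' q)
    (hp : p = r ++ q) (hr : r ≠ []) : a' = a ++ r := by
  have hapF : a ++ p ∈ M.F := pair_append_mem_F h1
  have ha'qF : a' ++ q ∈ M.F := pair_append_mem_F h2
  have ha0 : a ≠ [] := h1.ne_nil_left
  have hq0 : q ≠ [] := h2.ne_nil_right
  have hs1 : a' <:+ a ++ r := by
    apply h2.lmin (a ++ r) (fun h => ha0 (List.append_eq_nil_iff.mp h).1) ?_ ?_ ?_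
    · apply F_proper_nonzero hapF ⟨[], q, by simp [hp]⟩
      intro hcontra
      have hl := congrArg List.length hcontra
      simp only [hp, List.length_append] at hl
      have := List.length_pos_iff.mpr hq0
      omega
    · have hpath : M.toQuiverData.IsPath ((a ++ r) ++ q) := by
        rw [List.append_assoc, ← hp]
        exact M.F_path _ hapF
      exact (isPath_append.mp hpath).2.2
    · refine ⟨a ++ p, hapF, ?_⟩
      rw [hp, ← List.append_assoc]
  have hs2 : ¬ a' <:+ r := by
    intro hcon
    refine h1.nonzero_right.2 (IsZero.of_infix ⟨a' ++ q, ha'qF, List.infix_rfl⟩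
      (List.IsSuffix.isInfix ?_))
    rw [hp]
    obtain ⟨w, hw⟩ := hcon
    exact ⟨w, by rw [← List.append_assoc, hw]⟩
  have hs3 : r <:+ a' := by
    rcases le_or_gt a'.length r.length with hle | hlt
    · exact absurd (List.suffix_of_suffix_length_le hs1 (List.suffix_append a r) hle) hs2
    · exact List.suffix_of_suffix_length_le (List.suffix_append a r) hs1 (le_of_lt hlt)
  obtain ⟨d, hd⟩ := hs3
  have hda : d <:+ a := by
    apply suffix_append_right_cancel (z := r)
    rw [hd]
    exact hs1
  have hdne : d ≠ [] := by
    rintro rfl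
    rw [List.nil_append] at hd
    refine h1.nonzero_right.2 ⟨a' ++ q, ha'qF, ?_⟩
    rw [hp, hd]
  have hs4 : a <:+ d := by
    apply h1.lmin d hdne (h2.nonzero_left.of_infix (List.IsPrefix.isInfix ⟨r, hd⟩)) ?_ ?_
    · have hpath : M.toQuiverData.IsPath (d ++ p) := by
        have heq : d ++ p = a' ++ q := by rw [hp, ← List.append_assoc, hd]
        rw [heq]
        exact M.F_path _ ha'qF
      exact (isPath_append.mp hpath).2.2
    · refine ⟨a' ++ q, ha'qF, ?_⟩
      rw [hp, ← List.append_assoc, hd]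
  have hdaeq : d = a := hda.eq_of_length_le hs4.length_le
  rw [← hd, hdaeq]

/-- If `(P, P')`, `(Q, Q')` are perfect pairs and `P = r ++ Q` with `r` nontrivial,
then `Q' = P' ++ r'` for a nontrivial `r'`. -/
lemma lemE2 {P P' Q Q' r : List E} (h1 : M.PerfectPair P P') (h2 : M.PerfectPair Q Q')
    (hP : P = r ++ Q) (hr : r ≠ []) : ∃ r', Q' = P' ++ r' ∧ r' ≠ [] := by
  have hQ0 : Q ≠ [] := h2.ne_nil_left
  have hpre : P' <+: Q' := by
    apply h1.rmin Q' h2.ne_nil_right h2.nonzero_right ?_ ?_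
    · apply composable_last_congr h2.composable
      rw [hP, List.getLast?_append_of_ne_nil r hQ0]
    · obtain ⟨f, hf, hfi⟩ := h2.isZero
      exact ⟨f, hf, hfi.trans ⟨r, [], by simp [hP]⟩⟩
  obtain ⟨r', hr'⟩ := hpre
  refine ⟨r', hr'.symm, ?_⟩
  rintro rfl
  rw [List.append_nil] at hr'
  have hPQ : P = Q := pair_left_unique h1 (hr'.symm ▸ h2)
  apply hr
  have hlen : (r ++ Q).length = Q.length := by rw [← hP, hPQ]
  rw [List.length_append] at hlen
  have : r.length = 0 := by omega
  exact List.length_eq_zero_iff.mp this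

/-- If `q = p ++ r` with `p`, `q` members of perfect pairs as below, then
`(a ++ p, r)` is a perfect pair, where `a` is the predecessor of `q`. -/
lemma lemG {p p' q q' a r : List E} (hq : q = p ++ r) (hr : r ≠ [])
    (ha : M.PerfectPair a q) (hpp : M.PerfectPair p p') (hqq : M.PerfectPair q q') :
    M.PerfectPair (a ++ p) r := by
  have haqF : a ++ q ∈ M.F := pair_append_mem_F ha
  have hE : p' = r ++ q' := lemE hpp hqq hq hr
  have hp0 : p ≠ [] := hpp.ne_nil_left
  have ha0 : a ≠ [] := ha.ne_nil_left
  have haqpath : M.toQuiverData.IsPath (a ++ q) := M.F_path _ haqF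
  have hsplit : a ++ q = (a ++ p) ++ r := by rw [hq, List.append_assoc]
  have happath : M.toQuiverData.IsPath ((a ++ p) ++ r) := by rw [← hsplit]; exact haqpath
  have hapnz : M.Nonzero (a ++ p) := by
    apply F_proper_nonzero haqF ⟨[], r, by simp [hsplit]⟩
    intro hcontra
    have hl := congrArg List.length hcontra
    simp only [hq, List.length_append] at hl
    have := List.length_pos_iff.mpr hr
    omega
  have hrnz : M.Nonzero r := by
    apply F_proper_nonzero haqF ⟨a ++ p, [], by simp [hsplit]⟩
    intro hcontra
    have hl := congrArg List.length hcontra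
    simp only [hq, List.length_append] at hl
    have := List.length_pos_iff.mpr ha0
    have := List.length_pos_iff.mpr hp0
    omega
  refine ⟨fun h => ha0 (List.append_eq_nil_iff.mp h).1, hr, hapnz, hrnz, ?_, ?_, ?_, ?_⟩
  · exact (isPath_append.mp happath).2.2
  · refine ⟨a ++ q, haqF, ?_⟩
    rw [hsplit]
  · -- right minimality
    intro r' hr'0 hr'nz hcomp' hz'
    have hcpr' : M.toQuiverData.Composable p r' := by
      apply composable_last_congr hcomp'
      exact (List.getLast?_append_of_ne_nil a hp0).symm
    by_cases hpz : M.IsZero (p ++ r')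
    · have hpr := hpp.rmin r' hr'0 hr'nz hcpr' hpz
      rw [hE] at hpr
      exact (List.prefix_append r q').trans hpr
    · have hnz : M.Nonzero (p ++ r') :=
        ⟨isPath_append.mpr ⟨hpp.nonzero_left.1, hr'nz.1, hcpr'⟩, hpz⟩
      have hq'' := ha.rmin (p ++ r') (fun h => hp0 (List.append_eq_nil_iff.mp h).1) hnz ?_ ?_
      · rw [hq] at hq''
        exact (List.prefix_append_right_inj p).mp hq''
      · apply composable_head_congr ha.composable
        rw [hq, List.head?_append_of_ne_nil p hp0, List.head?_append_of_ne_nil p hp0]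
      · rw [← List.append_assoc]
        exact hz'
  · -- left minimality
    intro a'' ha''0 ha''nz hca'' hza''
    have hzp' : M.IsZero (a'' ++ p') := by
      refine IsZero.of_infix hza'' (List.IsPrefix.isInfix ?_)
      rw [hE, ← List.append_assoc]
      exact List.prefix_append _ q'
    have hprefp : p <:+ a'' := by
      apply hpp.lmin a'' ha''0 ha''nz ?_ hzp'
      apply composable_head_congr hca''
      rw [hE, List.head?_append_of_ne_nil r hr]
    obtain ⟨e, he⟩ := hprefp
    have hene : e ≠ [] := by
      rintro rfl
      rw [List.nil_append] at he
      exact hqq.nonzero_left.2 (by rw [hq, he]; exact hza'')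
    have hse : a <:+ e := by
      apply ha.lmin e hene (ha''nz.of_infix (List.IsPrefix.isInfix ⟨p, he⟩)) ?_ ?_
      · have hpath : M.toQuiverData.IsPath (e ++ q) := by
          have heq : e ++ q = a'' ++ r := by rw [hq, ← List.append_assoc, he]
          rw [heq]
          exact isPath_append.mpr ⟨ha''nz.1, hrnz.1, hca''⟩
        exact (isPath_append.mp hpath).2.2
      · rw [hq, ← List.append_assoc, he]
        exact hza''
    obtain ⟨w, hw⟩ := hse
    exact ⟨w, by rw [← he, ← hw, List.append_assoc]⟩

/-- Mirror of `lemG`: if `P = r ++ Q`, then `(r, Q ++ P')` is a perfect pair, where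
`P'` is the successor of `P`. -/
lemma lemG' {P P' Q b c r : List E} (hP : P = r ++ Q) (hr : r ≠ [])
    (hb : M.PerfectPair b P) (hc : M.PerfectPair c Q) (hPP : M.PerfectPair P P') :
    M.PerfectPair r (Q ++ P') := by
  have hPF : P ++ P' ∈ M.F := pair_append_mem_F hPP
  have hF : c = b ++ r := lemF hb hc hP hr
  have hQ0 : Q ≠ [] := hc.ne_nil_right
  have hP'0 : P' ≠ [] := hPP.ne_nil_right
  have hsplit : P ++ P' = r ++ (Q ++ P') := by rw [hP, List.append_assoc]
  have hpath : M.toQuiverData.IsPath (r ++ (Q ++ P')) := by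
    rw [← hsplit]
    exact M.F_path _ hPF
  have hQP'nz : M.Nonzero (Q ++ P') := by
    apply F_proper_nonzero hPF ⟨r, [], by simp [hsplit]⟩
    intro hcon
    have hl := congrArg List.length hcon
    simp only [hP, List.length_append] at hl
    have := List.length_pos_iff.mpr hr
    omega
  have hrnz : M.Nonzero r := by
    apply F_proper_nonzero hPF ⟨[], Q ++ P', by simp [hsplit]⟩
    intro hcon
    have hl := congrArg List.length hcon
    simp only [hP, List.length_append] at hl
    have := List.length_pos_iff.mpr hP'0
    have := List.length_pos_iff.mpr hQ0
    omega
  refine ⟨hr, fun h => hQ0 (List.append_eq_nil_iff.mp h).1, hrnz, hQP'nz, ?_, ?_, ?_, ?_⟩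
  · exact (isPath_append.mp hpath).2.2
  · refine ⟨P ++ P', hPF, ?_⟩
    rw [hsplit]
  · -- right minimality
    intro b' hb'0 hb'nz hcomp' hz'
    have hzc : M.IsZero (c ++ b') := by
      refine IsZero.of_infix hz' ?_
      rw [hF, List.append_assoc]
      exact (List.suffix_append b (r ++ b')).isInfix
    have hQb' : Q <+: b' := by
      apply hc.rmin b' hb'0 hb'nz ?_ hzc
      apply composable_last_congr hcomp'
      rw [hF, List.getLast?_append_of_ne_nil b hr]
    obtain ⟨e, he⟩ := hQb'
    have hene : e ≠ [] := by
      rintro rfl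
      rw [List.append_nil] at he
      exact hPP.nonzero_left.2 (by rw [hP, he]; exact hz')
    have hP'e : P' <+: e := by
      apply hPP.rmin e hene (hb'nz.of_infix (List.IsSuffix.isInfix ⟨Q, he⟩)) ?_ ?_
      · have hbpath : M.toQuiverData.IsPath (Q ++ e) := by rw [he]; exact hb'nz.1
        apply composable_last_congr (isPath_append.mp hbpath).2.2
        rw [hP, List.getLast?_append_of_ne_nil r hQ0]
      · rw [hP, List.append_assoc, he]
        exact hz'
    obtain ⟨w, hw⟩ := hP'e
    exact ⟨w, by rw [← he, ← hw, List.append_assoc]⟩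
  · -- left minimality
    intro a' ha'0 ha'nz hcomp' hz'
    have hcaQ : M.toQuiverData.Composable a' Q := by
      apply composable_head_congr hcomp'
      exact (List.head?_append_of_ne_nil Q hQ0).symm
    by_cases hQz : M.IsZero (a' ++ Q)
    · have hca' := hc.lmin a' ha'0 ha'nz hcaQ hQz
      have hrc : r <:+ c := by rw [hF]; exact List.suffix_append b r
      exact hrc.trans hca'
    · have hnzaQ : M.Nonzero (a' ++ Q) :=
        ⟨isPath_append.mpr ⟨ha'nz.1, hc.nonzero_right.1, hcaQ⟩, hQz⟩
      have hPs := hPP.lmin (a' ++ Q) (fun h => hQ0 (List.append_eq_nil_iff.mp h).2) hnzaQ ?_ ?_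
      · have hs : r ++ Q <:+ a' ++ Q := by rw [← hP]; exact hPs
        exact suffix_append_right_cancel hs
      · apply composable_last_congr hPP.composable
        rw [List.getLast?_append_of_ne_nil a' hQ0, hP, List.getLast?_append_of_ne_nil r hQ0]
      · rw [List.append_assoc]
        exact hz'

lemma periodic_mul {s : ℕ → List E} {n : ℕ} (hper : ∀ i, s (i + n) = s i) :
    ∀ c i, s (i + c * n) = s i := by
  intro c
  induction c with
  | zero => simp
  | succ c ih =>
    intro i
    have h : i + (c + 1) * n = (i + c * n) + n := by ring
    rw [h, hper, ih]

/-- Master lemma: if `ps 0 = r ++ qs 0` for perfect path sequences `ps`, `qs`,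
then `r` is perfect. -/
lemma master {r : List E} {n m : ℕ} {ps qs : ℕ → List E}
    (hn : 0 < n) (hm : 0 < m)
    (hpsper : ∀ i, ps (i + n) = ps i) (hqsper : ∀ i, qs (i + m) = qs i)
    (hpspair : ∀ i, M.PerfectPair (ps i) (ps (i + 1)))
    (hqspair : ∀ i, M.PerfectPair (qs i) (qs (i + 1)))
    (hrel : ps 0 = r ++ qs 0) (hr : r ≠ []) : M.IsPerfect r := by
  obtain ⟨K, hK⟩ : ∃ K, K = n * m := ⟨_, rfl⟩
  have hKpos : 0 < K := by rw [hK]; exact Nat.mul_pos hn hm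
  have hps2 : ∀ i, ps (i + 2 * K) = ps i := by
    intro i
    have h : i + 2 * K = i + (2 * m) * n := by rw [hK]; ring
    rw [h, periodic_mul hpsper]
  have hqs2 : ∀ i, qs (i + 2 * K) = qs i := by
    intro i
    have h : i + 2 * K = i + (2 * n) * m := by rw [hK]; ring
    rw [h, periodic_mul hqsper]
  set R : ℕ → List E := fun k => (ps (2 * k)).take ((ps (2 * k)).length - (qs (2 * k)).length)
    with hRdef
  have hR0 : R 0 = r := by
    show (ps (2 * 0)).take ((ps (2 * 0)).length - (qs (2 * 0)).length) = r
    have h0 : 2 * 0 = 0 := by norm_num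
    rw [h0, hrel, List.length_append]
    have h : r.length + (qs 0).length - (qs 0).length = r.length := by omega
    rw [h, List.take_left]
  have hstep : ∀ k, (ps (2 * k) = R k ++ qs (2 * k) ∧ R k ≠ []) →
      qs (2 * k + 1) = ps (2 * k + 1) ++ R (k + 1) ∧ R (k + 1) ≠ [] ∧
        ps (2 * (k + 1)) = R (k + 1) ++ qs (2 * (k + 1)) := by
    rintro k ⟨hk1, hk2⟩
    obtain ⟨r', hr'1, hr'2⟩ := lemE2 (hpspair (2 * k)) (hqspair (2 * k)) hk1 hk2
    have hE : ps (2 * k + 1 + 1) = r' ++ qs (2 * k + 1 + 1) :=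
      lemE (hpspair (2 * k + 1)) (hqspair (2 * k + 1)) hr'1 hr'2
    have hidx : 2 * (k + 1) = 2 * k + 1 + 1 := by ring
    have hRk1 : R (k + 1) = r' := by
      show (ps (2 * (k + 1))).take ((ps (2 * (k + 1))).length - (qs (2 * (k + 1))).length) = r'
      rw [hidx, hE, List.length_append]
      have h : r'.length + (qs (2 * k + 1 + 1)).length - (qs (2 * k + 1 + 1)).length
          = r'.length := by omega
      rw [h, List.take_left]
    refine ⟨by rw [hRk1]; exact hr'1, by rw [hRk1]; exact hr'2, by rw [hRk1, hidx]; exact hE⟩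
  have hInv : ∀ k, ps (2 * k) = R k ++ qs (2 * k) ∧ R k ≠ [] := by
    intro k
    induction k with
    | zero =>
      have h0 : 2 * 0 = 0 := by norm_num
      rw [h0, hR0]
      exact ⟨hrel, hr⟩
    | succ k ih =>
      obtain ⟨h1, h2, h3⟩ := hstep k ih
      exact ⟨h3, h2⟩
  have hMid : ∀ k, qs (2 * k + 1) = ps (2 * k + 1) ++ R (k + 1) :=
    fun k => (hstep k (hInv k)).1
  have hRper : ∀ k, R (k + K) = R k := by
    intro k
    show (ps (2 * (k + K))).take ((ps (2 * (k + K))).length - (qs (2 * (k + K))).length) =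
      (ps (2 * k)).take ((ps (2 * k)).length - (qs (2 * k)).length)
    have h : 2 * (k + K) = 2 * k + 2 * K := by ring
    rw [h, hps2, hqs2]
  refine ⟨2 * K, fun j => if j % 2 = 0 then R (j / 2) else qs (j - 1) ++ ps j,
    by omega, ?_, ?_, ?_⟩
  · show (if 0 % 2 = 0 then R (0 / 2) else qs (0 - 1) ++ ps 0) = r
    rw [if_pos (by norm_num)]
    simpa using hR0
  · intro i
    show (if (i + 2 * K) % 2 = 0 then R ((i + 2 * K) / 2) else qs (i + 2 * K - 1) ++
        ps (i + 2 * K)) = (if i % 2 = 0 then R (i / 2) else qs (i - 1) ++ ps i)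
    by_cases hpar : i % 2 = 0
    · rw [if_pos (by omega), if_pos hpar]
      have h2 : (i + 2 * K) / 2 = i / 2 + K := by omega
      rw [h2, hRper]
    · rw [if_neg (by omega), if_neg hpar]
      have h1 : i + 2 * K - 1 = (i - 1) + 2 * K := by omega
      rw [h1, hqs2, hps2]
  · intro j
    rcases Nat.even_or_odd j with ⟨k, hk⟩ | ⟨k, hk⟩
    · have hj : j = 2 * k := by omega
      subst hj
      show M.PerfectPair (if 2 * k % 2 = 0 then R (2 * k / 2) else qs (2 * k - 1) ++ ps (2 * k))
        (if (2 * k + 1) % 2 = 0 then R ((2 * k + 1) / 2)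
          else qs (2 * k + 1 - 1) ++ ps (2 * k + 1))
      rw [if_pos (by omega), if_neg (by omega)]
      have e2 : 2 * k / 2 = k := by omega
      have e4 : 2 * k + 1 - 1 = 2 * k := by omega
      rw [e2, e4]
      have hbp : M.PerfectPair (ps (2 * k + (2 * K - 1))) (ps (2 * k)) := by
        have hp := hpspair (2 * k + (2 * K - 1))
        have he : 2 * k + (2 * K - 1) + 1 = 2 * k + 2 * K := by omega
        rw [he, hps2] at hp
        exact hp
      have hcp : M.PerfectPair (qs (2 * k + (2 * K - 1))) (qs (2 * k)) := by
        have hp := hqspair (2 * k + (2 * K - 1))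
        have he : 2 * k + (2 * K - 1) + 1 = 2 * k + 2 * K := by omega
        rw [he, hqs2] at hp
        exact hp
      exact lemG' (hInv k).1 (hInv k).2 hbp hcp (hpspair (2 * k))
    · have hj : j = 2 * k + 1 := by omega
      subst hj
      show M.PerfectPair (if (2 * k + 1) % 2 = 0 then R ((2 * k + 1) / 2)
          else qs (2 * k + 1 - 1) ++ ps (2 * k + 1))
        (if (2 * k + 1 + 1) % 2 = 0 then R ((2 * k + 1 + 1) / 2)
          else qs (2 * k + 1 + 1 - 1) ++ ps (2 * k + 1 + 1))
      rw [if_neg (by omega), if_pos (by omega)]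
      have e4 : 2 * k + 1 - 1 = 2 * k := by omega
      have e5 : (2 * k + 1 + 1) / 2 = k + 1 := by omega
      rw [e4, e5]
      exact lemG (hMid k) (hstep k (hInv k)).2.1 (hqspair (2 * k)) (hpspair (2 * k + 1))
        (hqspair (2 * k + 1))

end MonomialData

/-- for perfect paths `p`, `q`: (1) if `p` is a proper left
divisor of `q`, say `q = pr` with `r` nontrivial, then `r` is perfect;
(2) if `q` is a proper right divisor of `p`, say `p = rq` with `r` nontrivial,
then `r` is perfect. -/
theorem factor_of_divisor_perfect {V E : Type} (M : MonomialData V E)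
    (p q r : List E) (hp : M.IsPerfect p) (hq : M.IsPerfect q) :
    (q = p ++ r → r ≠ [] → M.IsPerfect r) ∧
    (p = r ++ q → r ≠ [] → M.IsPerfect r) := by
  obtain ⟨n, ps, hn, hps0, hpsper, hpspair⟩ := hp
  obtain ⟨m, qs, hm, hqs0, hqsper, hqspair⟩ := hq
  constructor
  · intro hqp hr
    have hrel : ps 1 = r ++ qs 1 :=
      MonomialData.lemE (hpspair 0) (hqspair 0) (by rw [hqs0, hps0]; exact hqp) hr
    refine MonomialData.master (M := M) hn hm (ps := fun i => ps (i + 1))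
      (qs := fun i => qs (i + 1)) ?_ ?_ (fun i => hpspair (i + 1)) (fun i => hqspair (i + 1))
      hrel hr
    · intro i
      show ps (i + n + 1) = ps (i + 1)
      have h : i + n + 1 = (i + 1) + n := by omega
      rw [h, hpsper]
    · intro i
      show qs (i + m + 1) = qs (i + 1)
      have h : i + m + 1 = (i + 1) + m := by omega
      rw [h, hqsper]
  · intro hpq hr
    exact MonomialData.master (M := M) hn hm hpsper hqsper hpspair hqspair
      (by rw [hps0, hqs0]; exact hpq) hr
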